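/- If two bounded operators L₁, L₂ on a Banach space satisfy ‖L_j² e^{sL_j} w‖ ≤ M for all s ∈ [0, τ] (j = 1,2) and L₁ w = L₂ w, then ‖e^{τL₁} w − e^{τL₂} w‖ ≤ M τ². -/

import Mathlib

/-- One-step consistency estimate: if two bounded operators `L₁, L₂` on a Banach
space satisfy `‖L_j² e^{sL_j} w‖ ≤ M` for all `s ∈ [0,τ]` (`j = 1,2`) and
`L₁ w = L₂ w`, then `‖e^{τL₁} w − e^{τL₂} w‖ ≤ M τ²`. -/
theorem exp_one_step_consistency {E : Type*} [NormedAddCommGroup E] [NormedSpace ℝ E]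
    [CompleteSpace E] (L₁ L₂ : E →L[ℝ] E) (w : E) (M τ : ℝ) (hτ : 0 ≤ τ)
    (h1 : ∀ s ∈ Set.Icc (0:ℝ) τ, ‖(L₁ ∘L L₁) ((NormedSpace.exp (s • L₁)) w)‖ ≤ M)
    (h2 : ∀ s ∈ Set.Icc (0:ℝ) τ, ‖(L₂ ∘L L₂) ((NormedSpace.exp (s • L₂)) w)‖ ≤ M)
    (hLw : L₁ w = L₂ w) :
    ‖(NormedSpace.exp (τ • L₁)) w - (NormedSpace.exp (τ • L₂)) w‖ ≤ M * τ ^ 2 := by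
  -- derivative of s ↦ exp (s • L) w
  have hd : ∀ (L : E →L[ℝ] E) (t : ℝ),
      HasDerivAt (fun s : ℝ => (NormedSpace.exp (s • L)) w)
        (L ((NormedSpace.exp (t • L)) w)) t := by
    intro L t
    have h := (hasDerivAt_exp_smul_const' (𝕂 := ℝ) L t)
    have := (ContinuousLinearMap.apply ℝ E w).hasFDerivAt.comp_hasDerivAt t h
    simpa [Function.comp_def] using this
  -- derivative of s ↦ L (exp (s • L) w)
  have hd2 : ∀ (L : E →L[ℝ] E) (t : ℝ),
      HasDerivAt (fun s : ℝ => L ((NormedSpace.exp (s • L)) w))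
        ((L ∘L L) ((NormedSpace.exp (t • L)) w)) t := by
    intro L t
    have := L.hasFDerivAt.comp_hasDerivAt t (hd L t)
    simpa [Function.comp_def] using this
  set g : ℝ → E := fun s =>
    (NormedSpace.exp (s • L₁)) w - (NormedSpace.exp (s • L₂)) w with hg
  set g' : ℝ → E := fun s =>
    L₁ ((NormedSpace.exp (s • L₁)) w) - L₂ ((NormedSpace.exp (s • L₂)) w) with hg'
  have hgd : ∀ t : ℝ, HasDerivAt g (g' t) t := fun t => (hd L₁ t).sub (hd L₂ t)
  have hgd2 : ∀ t : ℝ, HasDerivAt g'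
      ((L₁ ∘L L₁) ((NormedSpace.exp (t • L₁)) w)
        - (L₂ ∘L L₂) ((NormedSpace.exp (t • L₂)) w)) t :=
    fun t => (hd2 L₁ t).sub (hd2 L₂ t)
  have hM : 0 ≤ M := le_trans (norm_nonneg _) (h1 0 ⟨le_refl _, hτ⟩)
  have hg'0 : g' 0 = 0 := by
    simp [hg', hLw]
  -- bound on g'
  have hbd : ∀ s ∈ Set.Icc (0:ℝ) τ, ‖g' s‖ ≤ 2 * M * s := by
    have := norm_image_sub_le_of_norm_deriv_le_segment'
      (f := g') (a := (0:ℝ)) (b := τ)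
      (f' := fun t => (L₁ ∘L L₁) ((NormedSpace.exp (t • L₁)) w)
        - (L₂ ∘L L₂) ((NormedSpace.exp (t • L₂)) w)) (C := 2 * M)
      (fun t _ => (hgd2 t).hasDerivWithinAt)
      (fun t ht => by
        have ht' : t ∈ Set.Icc (0:ℝ) τ := Set.Ico_subset_Icc_self ht
        calc ‖_‖ ≤ ‖(L₁ ∘L L₁) ((NormedSpace.exp (t • L₁)) w)‖
              + ‖(L₂ ∘L L₂) ((NormedSpace.exp (t • L₂)) w)‖ := norm_sub_le _ _
          _ ≤ M + M := add_le_add (h1 t ht') (h2 t ht')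
          _ = 2 * M := by ring)
    intro s hs
    have := this s hs
    simpa [hg'0] using this
  -- fencing: ‖g s‖ ≤ M * s ^ 2
  have key : ∀ s ∈ Set.Icc (0:ℝ) τ, ‖g s‖ ≤ M * s ^ 2 := by
    have h0 : ‖g 0‖ ≤ M * (0:ℝ) ^ 2 := by simp [hg]
    have hB : ∀ x : ℝ, HasDerivAt (fun s => M * s ^ 2) (2 * M * x) x := by
      intro x
      have := ((hasDerivAt_pow 2 x).const_mul M)
      simpa [mul_comm, mul_assoc, mul_left_comm] using this
    exact fun s hs =>
      image_norm_le_of_norm_deriv_right_le_deriv_boundary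
        (f := g) (f' := g') (a := 0) (b := τ)
        (fun t _ => (hgd t).continuousAt.continuousWithinAt)
        (fun t _ => (hgd t).hasDerivWithinAt) h0 hB
        (fun t ht => hbd t (Set.Ico_subset_Icc_self ht)) hs
  simpa using key τ ⟨hτ, le_refl _⟩
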